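/- Let X be a reflexive and strictly convex Banach space with property (H). Let A and B = A + h be proximinal parallel subsets of X with ‖h‖ = dist(A,B) = d and C = A + 2h, and suppose B is nonempty, closed and convex. Then the metric induced by the norm on B and the semimetric d₁(x,y) = inf{r > 0 : ‖y−(x−h)‖ ≤ d+r and ‖y−(x+h)‖ ≤ d+r} are compatible on B. -/

import Mathlib

open Filter Metric

/-- The distance between two sets: `inf {d(x,y) : x ∈ A, y ∈ B}`. -/
noncomputable def setDist {X : Type*} [PseudoMetricSpace X] (A B : Set X) : ℝ :=
  sInf (Set.image2 dist A B)

/-- `(A,B)` is a sharp proximinal pair. -/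
def SharpProximinalPair {X : Type*} [NormedAddCommGroup X] (A B : Set X) : Prop :=
  ∀ x ∈ A, ∀ y ∈ B, ∃! p : X × X,
    p.1 ∈ A ∧ p.2 ∈ B ∧ dist x p.2 = setDist A B ∧ dist p.1 y = setDist A B

/-- `A` and `B` are proximinal parallel sets, with `B = A + h` and `‖h‖ = dist(A,B)`. -/
def ProximinalParallel {X : Type*} [NormedAddCommGroup X] (A B : Set X) (h : X) : Prop :=
  SharpProximinalPair A B ∧ B = (fun a => a + h) '' A ∧ ‖h‖ = setDist A B

/-- The semimetric `d₁(x,y) = inf {r > 0 : ‖y - (x - h)‖ ≤ d + r and ‖y - (x + h)‖ ≤ d + r}`. -/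
noncomputable def semiD1 {X : Type*} [NormedAddCommGroup X] (h : X) (d : ℝ) (x y : X) : ℝ :=
  sInf {r : ℝ | 0 < r ∧ ‖y - (x - h)‖ ≤ d + r ∧ ‖y - (x + h)‖ ≤ d + r}

/-- The sequence `x` converges weakly to `z`. -/
def WeakTendsto {X : Type*} [NormedAddCommGroup X] [NormedSpace ℝ X]
    (x : ℕ → X) (z : X) : Prop :=
  ∀ f : X →L[ℝ] ℝ, Tendsto (fun n => f (x n)) atTop (nhds (f z))

/-- `X` is reflexive: the canonical embedding into the double dual is surjective. -/
def ReflexiveSpace (X : Type*) [NormedAddCommGroup X] [NormedSpace ℝ X] : Prop :=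
  Function.Surjective (NormedSpace.inclusionInDoubleDual ℝ X)

/-- Property (H): for sequences on the unit sphere, weak and norm convergence coincide. -/
def PropertyH (X : Type*) [NormedAddCommGroup X] [NormedSpace ℝ X] : Prop :=
  ∀ (x : ℕ → X) (z : X), (∀ n, ‖x n‖ = 1) →
    (WeakTendsto x z ↔ Tendsto x atTop (nhds z))

/-- Auxiliary: a bounded sequence all of whose weak cluster points must be `0`
(as expressed through the hypothesis `hzero` together with the two-ball estimates)
is weakly null.  This uses reflexivity together with the Banach–Alaoglu theorem:
the images in the double dual lie in a weak-star compact ball, every cluster point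
comes from an element of `X` by reflexivity, and that element is forced to be `0`. -/
lemma weak_null_aux {X : Type*} [NormedAddCommGroup X] [NormedSpace ℝ X]
    (hrefl : ReflexiveSpace X) (h : X) (y : ℕ → X) (G : ℕ → ℝ)
    (hG0 : Tendsto G atTop (nhds 0)) (hGle1 : ∀ n, G n ≤ 1)
    (hy1 : ∀ n, ‖y n + h‖ ≤ ‖h‖ + G n) (hy2 : ∀ n, ‖y n - h‖ ≤ ‖h‖ + G n)
    (hzero : ∀ z : X, ‖z + h‖ ≤ ‖h‖ → ‖z - h‖ ≤ ‖h‖ → z = 0) :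
    WeakTendsto y 0 := by
  intro f
  rw [tendsto_iff_ultrafilter]
  intro U hU
  set J := NormedSpace.inclusionInDoubleDual ℝ X with hJ
  set R : ℝ := 2 * ‖h‖ + 1 with hR
  set seq : ℕ → WeakDual ℝ (StrongDual ℝ X) :=
    fun n => StrongDual.toWeakDual (J (y n)) with hseq
  have hybound : ∀ n, ‖y n‖ ≤ R := by
    intro n
    have e : y n = (y n + h) - h := by abel
    calc ‖y n‖ = ‖(y n + h) - h‖ := by rw [← e]
      _ ≤ ‖y n + h‖ + ‖h‖ := norm_sub_le _ _
      _ ≤ (‖h‖ + G n) + ‖h‖ := by linarith [hy1 n]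
      _ ≤ R := by have := hGle1 n; rw [hR]; linarith
  have hmem : ∀ n, seq n ∈
      (WeakDual.toStrongDual ⁻¹'
        Metric.closedBall (0 : StrongDual ℝ (StrongDual ℝ X)) R) := by
    intro n
    simp only [Set.mem_preimage, Metric.mem_closedBall, dist_zero_right]
    refine le_trans (dist_zero_right (WeakDual.toStrongDual (seq n))).le ?_
    calc ‖WeakDual.toStrongDual (seq n)‖ = ‖J (y n)‖ := rfl
      _ ≤ ‖y n‖ := NormedSpace.double_dual_bound ℝ X (y n)
      _ ≤ R := hybound n
  have hK : IsCompact (WeakDual.toStrongDual ⁻¹'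
      Metric.closedBall (0 : StrongDual ℝ (StrongDual ℝ X)) R) :=
    WeakDual.isCompact_closedBall (𝕜 := ℝ) (E := StrongDual ℝ X) 0 R
  have hle : ↑(U.map seq) ≤
      Filter.principal (WeakDual.toStrongDual ⁻¹'
        Metric.closedBall (0 : StrongDual ℝ (StrongDual ℝ X)) R) :=
    Filter.le_principal_iff.mpr (Filter.mem_map.mpr (Filter.univ_mem' hmem))
  obtain ⟨a, _haK, haU⟩ := hK.ultrafilter_le_nhds (U.map seq) hle
  have hT : Tendsto seq ↑U (nhds a) := by
    rwa [Ultrafilter.coe_map] at haU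
  obtain ⟨z, hz⟩ := hrefl (WeakDual.toStrongDual a)
  have hφlim : ∀ φ : StrongDual ℝ X, Tendsto (fun n => φ (y n)) ↑U (nhds (φ z)) := by
    intro φ
    have hc : Continuous fun v : WeakDual ℝ (StrongDual ℝ X) => v φ :=
      WeakDual.eval_continuous φ
    have h2 : Tendsto (fun n => (seq n) φ) ↑U (nhds (a φ)) := (hc.tendsto a).comp hT
    have e1 : ∀ n, (seq n) φ = φ (y n) := fun n => rfl
    have e2 : a φ = φ z := by
      have : (WeakDual.toStrongDual a) φ = φ z := by rw [← hz]; rfl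
      exact this.symm ▸ rfl
    rw [← e2]
    exact h2.congr fun n => e1 n
  have hGU : Tendsto G ↑U (nhds 0) := hG0.mono_left hU
  have key : ∀ (w : X), (∀ n : ℕ, ‖y n + w‖ ≤ ‖h‖ + G n) → ‖z + w‖ ≤ ‖h‖ := by
    intro w hw
    apply NormedSpace.norm_le_dual_bound ℝ _ (norm_nonneg h)
    intro φ
    have t1 : Tendsto (fun n => ‖φ (y n) + φ w‖) ↑U (nhds ‖φ z + φ w‖) :=
      ((hφlim φ).add tendsto_const_nhds).norm
    have t2 : Tendsto (fun n => ‖φ‖ * (‖h‖ + G n)) ↑U (nhds (‖φ‖ * (‖h‖ + 0))) :=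
      tendsto_const_nhds.mul (tendsto_const_nhds.add hGU)
    have hpt : ∀ n, ‖φ (y n) + φ w‖ ≤ ‖φ‖ * (‖h‖ + G n) := by
      intro n
      calc ‖φ (y n) + φ w‖ = ‖φ (y n + w)‖ := by rw [map_add]
        _ ≤ ‖φ‖ * ‖y n + w‖ := φ.le_opNorm _
        _ ≤ ‖φ‖ * (‖h‖ + G n) := mul_le_mul_of_nonneg_left (hw n) (norm_nonneg φ)
    have hfin : ‖φ z + φ w‖ ≤ ‖φ‖ * (‖h‖ + 0) :=
      le_of_tendsto_of_tendsto' t1 t2 hpt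
    calc ‖φ (z + w)‖ = ‖φ z + φ w‖ := by rw [map_add]
      _ ≤ ‖φ‖ * (‖h‖ + 0) := hfin
      _ = ‖h‖ * ‖φ‖ := by ring
  have hz1 : ‖z + h‖ ≤ ‖h‖ := key h hy1
  have hz2 : ‖z - h‖ ≤ ‖h‖ := by
    have := key (-h) (fun n => by
      have e : y n + -h = y n - h := by abel
      rw [e]; exact hy2 n)
    have e : z + -h = z - h := by abel
    rwa [e] at this
  have hz0 : z = 0 := hzero z hz1 hz2
  have : Tendsto (fun n => f (y n)) ↑U (nhds (f z)) := hφlim f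
  rw [hz0] at this
  simpa using this

/-- Auxiliary: in a reflexive strictly convex space with property (H),
points almost in the intersection of the two balls `B(-h, ‖h‖+g)` and `B(h, ‖h‖+g)`
are uniformly close to `0` as `g → 0`. -/
lemma core_lemma {X : Type*} [NormedAddCommGroup X] [NormedSpace ℝ X]
    [StrictConvexSpace ℝ X]
    (hrefl : ReflexiveSpace X) (hH : PropertyH X) (h : X) {ε : ℝ} (hε : 0 < ε) :
    ∃ g > (0 : ℝ), ∀ y : X, ‖y + h‖ ≤ ‖h‖ + g → ‖y - h‖ ≤ ‖h‖ + g → ‖y‖ ≤ ε := by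
  by_cases hd0 : h = 0
  · exact ⟨ε, hε, fun y h1 _ => by simpa [hd0] using h1⟩
  have hd : 0 < ‖h‖ := norm_pos_iff.mpr hd0
  have hhh : ‖h + h‖ = ‖h‖ + ‖h‖ := by
    rw [← two_smul ℝ h, norm_smul]
    simp [abs_of_nonneg]
    ring
  by_contra hcon
  push_neg at hcon
  set G : ℕ → ℝ := fun n => min (‖h‖ / 2) ((n : ℝ) + 1)⁻¹ with hGdef
  have hGpos : ∀ n, 0 < G n := fun n => lt_min (by positivity) (by positivity)
  have hGle1 : ∀ n, G n ≤ 1 := by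
    intro n
    refine le_trans (min_le_right _ _) ?_
    rw [show (1 : ℝ) = 1⁻¹ by norm_num]
    apply inv_anti₀ one_pos
    have : (0 : ℝ) ≤ (n : ℝ) := Nat.cast_nonneg n
    linarith
  have hGhalf : ∀ n, G n ≤ ‖h‖ / 2 := fun n => min_le_left _ _
  have hGtend : Tendsto G atTop (nhds 0) := by
    have t : Tendsto (fun n : ℕ => ((n : ℝ) + 1)⁻¹) atTop (nhds 0) := by
      simpa [one_div] using tendsto_one_div_add_atTop_nhds_zero_nat (𝕜 := ℝ)
    exact tendsto_of_tendsto_of_tendsto_of_le_of_le tendsto_const_nhds t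
      (fun n => (hGpos n).le) (fun n => min_le_right _ _)
  choose y hy1 hy2 hy3 using fun n => hcon (G n) (hGpos n)
  -- strict convexity: the exact intersection of the two balls is {0}
  have hzero : ∀ z : X, ‖z + h‖ ≤ ‖h‖ → ‖z - h‖ ≤ ‖h‖ → z = 0 := by
    intro z h1 h2
    have h1' : ‖h + z‖ ≤ ‖h‖ := by rwa [add_comm] at h1
    have h2' : ‖h - z‖ ≤ ‖h‖ := by rwa [norm_sub_rev] at h2
    have hsum : (h + z) + (h - z) = h + h := by abel
    have hge : ‖h‖ + ‖h‖ ≤ ‖h + z‖ + ‖h - z‖ := by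
      calc ‖h‖ + ‖h‖ = ‖(h + z) + (h - z)‖ := by rw [hsum, hhh]
        _ ≤ ‖h + z‖ + ‖h - z‖ := norm_add_le _ _
    have e1 : ‖h + z‖ = ‖h‖ := le_antisymm h1' (by linarith)
    have e2 : ‖h - z‖ = ‖h‖ := le_antisymm h2' (by linarith)
    have heq : h + z = h - z := by
      apply eq_of_norm_eq_of_norm_add_eq
      · rw [e1, e2]
      · rw [hsum, hhh, e1, e2]
    have hzz : (2 : ℝ) • z = 0 := by
      rw [two_smul]
      have : z - -z = 0 := by
        have : h + z - (h - z) = 0 := by rw [heq]; abel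
        calc z - -z = h + z - (h - z) := by abel
          _ = 0 := this
      calc z + z = z - -z := by abel
        _ = 0 := this
    rcases smul_eq_zero.mp hzz with h' | h'
    · norm_num at h'
    · exact h'
  have hwt : WeakTendsto y 0 :=
    weak_null_aux hrefl h y G hGtend hGle1 (fun n => (hy1 n)) (fun n => (hy2 n)) hzero
  -- norms of y n + h converge to ‖h‖
  have hl : ∀ n, ‖h‖ - G n ≤ ‖y n + h‖ := by
    intro n
    have e : (y n + h) - (y n - h) = h + h := by abel
    have : ‖h + h‖ ≤ ‖y n + h‖ + ‖y n - h‖ := by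
      calc ‖h + h‖ = ‖(y n + h) - (y n - h)‖ := by rw [e]
        _ ≤ ‖y n + h‖ + ‖y n - h‖ := norm_sub_le _ _
    have := hy2 n
    linarith [hhh ▸ ‹‖h + h‖ ≤ ‖y n + h‖ + ‖y n - h‖›]
  have hpos : ∀ n, 0 < ‖y n + h‖ := by
    intro n
    have := hGhalf n
    have := hl n
    linarith
  have hnt : Tendsto (fun n => ‖y n + h‖) atTop (nhds ‖h‖) := by
    have tlow : Tendsto (fun n => ‖h‖ - G n) atTop (nhds ‖h‖) := by
      simpa using tendsto_const_nhds.sub hGtend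
    have thigh : Tendsto (fun n => ‖h‖ + G n) atTop (nhds ‖h‖) := by
      simpa using tendsto_const_nhds.add hGtend
    exact tendsto_of_tendsto_of_tendsto_of_le_of_le tlow thigh hl (fun n => hy1 n)
  set u : ℕ → X := fun n => ‖y n + h‖⁻¹ • (y n + h) with hu
  have hu1 : ∀ n, ‖u n‖ = 1 := by
    intro n
    rw [hu]
    simp only [norm_smul, norm_inv, norm_norm]
    exact inv_mul_cancel₀ (hpos n).ne'
  have huw : WeakTendsto u (‖h‖⁻¹ • h) := by
    intro f
    have hf0 : Tendsto (fun n => f (y n)) atTop (nhds 0) := by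
      simpa using hwt f
    have hfyh : Tendsto (fun n => f (y n + h)) atTop (nhds (f h)) := by
      have := hf0.add (tendsto_const_nhds (x := f h))
      simpa [map_add] using this
    have hinv : Tendsto (fun n => ‖y n + h‖⁻¹) atTop (nhds ‖h‖⁻¹) :=
      hnt.inv₀ hd.ne'
    have := hinv.mul hfyh
    have e : ∀ n, f (u n) = ‖y n + h‖⁻¹ * f (y n + h) := by
      intro n
      rw [hu]
      simp [map_smul, smul_eq_mul, mul_add]
    have e2 : f (‖h‖⁻¹ • h) = ‖h‖⁻¹ * f h := by simp [map_smul, smul_eq_mul]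
    rw [e2] at *
    exact this.congr fun n => (e n).symm
  have hun : Tendsto u atTop (nhds (‖h‖⁻¹ • h)) := (hH u _ hu1).mp huw
  have hyh : Tendsto (fun n => y n + h) atTop (nhds h) := by
    have hsm : Tendsto (fun n => ‖y n + h‖ • u n) atTop (nhds (‖h‖ • ‖h‖⁻¹ • h)) :=
      hnt.smul hun
    have e : ∀ n, ‖y n + h‖ • u n = y n + h := by
      intro n
      rw [hu]
      exact smul_inv_smul₀ (hpos n).ne' _
    have e2 : ‖h‖ • ‖h‖⁻¹ • h = h := smul_inv_smul₀ hd.ne' h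
    rw [e2] at hsm
    exact hsm.congr fun n => e n
  have hy0 : Tendsto y atTop (nhds 0) := by
    have := hyh.sub_const h
    simpa [add_sub_cancel_right, sub_self] using this
  have hev : ∀ᶠ n in atTop, ‖y n‖ < ε := by
    have hnorm0 : Tendsto (fun n => ‖y n‖) atTop (nhds 0) := by
      simpa using hy0.norm
    exact hnorm0.eventually_lt_const hε
  obtain ⟨n, hn⟩ := hev.exists
  exact absurd (hy3 n) (not_lt.mpr hn.le)

theorem norm_and_d1_compatible {X : Type*} [NormedAddCommGroup X]
    [NormedSpace ℝ X] [CompleteSpace X] [StrictConvexSpace ℝ X]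
    (hrefl : ReflexiveSpace X) (hH : PropertyH X)
    (A B : Set X) (h : X) (hpar : ProximinalParallel A B h)
    (C : Set X) (hC : C = (fun a => a + h + h) '' A)
    (hBne : B.Nonempty) (hBclosed : IsClosed B) (hBconv : Convex ℝ B)
    (d : ℝ) (hd : d = setDist A B) :
    ∀ ε > (0 : ℝ), ∀ x ∈ B, ∃ fx > (0 : ℝ), ∃ gx > (0 : ℝ),
      (B ∩ Metric.closedBall x fx ⊆ {y ∈ B | semiD1 h d x y ≤ ε}) ∧
      ({y ∈ B | semiD1 h d x y ≤ gx} ⊆ B ∩ Metric.closedBall x ε) := by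
  obtain ⟨_hsharp, _hB, hnorm⟩ := hpar
  have hdh : d = ‖h‖ := by rw [hd, ← hnorm]
  have hd0 : (0 : ℝ) ≤ d := hdh ▸ norm_nonneg h
  intro ε hε x hx
  obtain ⟨g, hg, hkey⟩ := core_lemma hrefl hH h hε
  refine ⟨ε, hε, g, hg, ?_, ?_⟩
  · rintro y ⟨hyB, hyb⟩
    refine ⟨hyB, ?_⟩
    have hyx : ‖y - x‖ ≤ ε := by rwa [Metric.mem_closedBall, dist_eq_norm] at hyb
    have hbdd : BddBelow {r : ℝ | 0 < r ∧ ‖y - (x - h)‖ ≤ d + r ∧ ‖y - (x + h)‖ ≤ d + r} :=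
      ⟨0, fun r hr => hr.1.le⟩
    have key : ∀ δ > (0 : ℝ), semiD1 h d x y ≤ ε + δ := by
      intro δ hδ
      apply csInf_le hbdd
      refine ⟨by linarith, ?_, ?_⟩
      · have e : y - (x - h) = (y - x) + h := by abel
        have : ‖y - (x - h)‖ ≤ ‖y - x‖ + ‖h‖ := by
          rw [e]; exact norm_add_le _ _
        have := hdh
        linarith [‹‖y - (x - h)‖ ≤ ‖y - x‖ + ‖h‖›]
      · have e : y - (x + h) = (y - x) - h := by abel
        have : ‖y - (x + h)‖ ≤ ‖y - x‖ + ‖h‖ := by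
          rw [e]; exact norm_sub_le _ _
        linarith [‹‖y - (x + h)‖ ≤ ‖y - x‖ + ‖h‖›]
    exact le_of_forall_pos_le_add key
  · rintro y ⟨hyB, hyd⟩
    refine ⟨hyB, ?_⟩
    have hSne : Set.Nonempty
        {r : ℝ | 0 < r ∧ ‖y - (x - h)‖ ≤ d + r ∧ ‖y - (x + h)‖ ≤ d + r} := by
      refine ⟨‖y - (x - h)‖ + ‖y - (x + h)‖ + 1, ?_, ?_, ?_⟩
      · positivity
      · linarith [norm_nonneg (y - (x + h))]
      · linarith [norm_nonneg (y - (x - h))]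
    have hball : ∀ c : X, (∀ r ∈ {r : ℝ | 0 < r ∧ ‖y - (x - h)‖ ≤ d + r ∧
        ‖y - (x + h)‖ ≤ d + r}, ‖y - c‖ ≤ d + r) → ‖y - c‖ ≤ d + g := by
      intro c hc
      refine le_of_forall_pos_le_add ?_
      intro δ hδ
      have hlt : sInf {r : ℝ | 0 < r ∧ ‖y - (x - h)‖ ≤ d + r ∧ ‖y - (x + h)‖ ≤ d + r}
          < g + δ := lt_of_le_of_lt hyd (by linarith)
      obtain ⟨r, hrS, hrlt⟩ := exists_lt_of_csInf_lt hSne hlt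
      have := hc r hrS
      linarith
    have hb1 : ‖y - (x - h)‖ ≤ d + g := hball (x - h) (fun r hr => hr.2.1)
    have hb2 : ‖y - (x + h)‖ ≤ d + g := hball (x + h) (fun r hr => hr.2.2)
    rw [Metric.mem_closedBall, dist_eq_norm]
    apply hkey (y - x)
    · have e : (y - x) + h = y - (x - h) := by abel
      rw [e, ← hdh]
      exact hb1
    · have e : (y - x) - h = y - (x + h) := by abel
      rw [e, ← hdh]
      exact hb2
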